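/- arXiv:1512.05672 — 4 statements merged into one kernel-verified Lean document; each statement's English description precedes it below -/
import Mathlib

section
/- Let R → S be a homomorphism of Noetherian rings such that S is flat as an R-module, and let E be an R-module. If the set of associated primes Ass_R(E) is finite, then the set of associated primes Ass_S(E ⊗_R S) is also finite. -/
/- STATEMENT 0: If `R → S` is a homomorphism of Noetherian rings with `S` flat over `R`, and
`E` is an `R`-module with `Ass_R E` finite, then `Ass_S (E ⊗_R S)` is finite.
Here `E ⊗_R S` (as an `S`-module) is realized as `S ⊗[R] E` with its canonical `S`-module
structure. -/

universe u v w

set_option maxHeartbeats 1000000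
set_option linter.unusedSectionVars false

open LinearMap Submodule TensorProduct


open LinearMap Submodule

section General

variable {R : Type*} [CommRing R] {M : Type*} [AddCommGroup M] [Module R M]

/-- Ass M ⊆ Ass N ∪ Ass (M/N) for a submodule N ≤ M. -/
theorem aux_ass_subset_union (N : Submodule R M) :
    associatedPrimes R M ⊆ associatedPrimes R N ∪ associatedPrimes R (M ⧸ N) := by
  rintro P ⟨hP, x, hx⟩
  have hmem : ∀ s : R, s ∈ P ↔ ∃ n : ℕ, s ^ n • x = 0 := fun s => by
    rw [hx, Ideal.mem_radical_iff]
    simp only [Submodule.mem_colon_singleton, Submodule.mem_bot]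
  by_cases hcase : ∀ r : R, r • x ∈ N → r ∈ P
  · right
    refine ⟨hP, N.mkQ x, ?_⟩
    ext r
    rw [Ideal.mem_radical_iff]
    simp only [Submodule.mem_colon_singleton, Submodule.mem_bot, Submodule.mkQ_apply,
      ← Submodule.Quotient.mk_smul, Submodule.Quotient.mk_eq_zero]
    constructor
    · intro h
      obtain ⟨n, hn⟩ := (hmem r).mp h
      exact ⟨n, by rw [hn]; exact N.zero_mem⟩
    · rintro ⟨n, hn⟩
      exact hP.mem_of_pow_mem n (hcase _ hn)
  · left
    push_neg at hcase
    obtain ⟨r, hrN, hrP⟩ := hcase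
    refine ⟨hP, ⟨r • x, hrN⟩, ?_⟩
    ext s
    rw [Ideal.mem_radical_iff]
    simp only [Submodule.mem_colon_singleton, Submodule.mem_bot]
    constructor
    · intro hs
      obtain ⟨n, hn⟩ := (hmem s).mp hs
      refine ⟨n, Subtype.ext ?_⟩
      show s ^ n • r • x = 0
      rw [smul_comm, hn, smul_zero]
    · rintro ⟨n, hn⟩
      have h1 : (s ^ n * r) • x = 0 := by
        have := congrArg Subtype.val hn
        rw [mul_smul]; exact this
      rcases hP.mem_or_mem ((hmem _).mpr ⟨1, by rw [pow_one]; exact h1⟩) with h | h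
      · exact hP.mem_of_pow_mem n h
      · exact absurd h hrP

/-- Ass B ⊆ Ass A ∪ Ass C for a short exact sequence A → B → C. -/
theorem aux_ass_subset_of_exact {A B C : Type*} [AddCommGroup A] [Module R A]
    [AddCommGroup B] [Module R B] [AddCommGroup C] [Module R C]
    (f : A →ₗ[R] B) (g : B →ₗ[R] C) (hf : Function.Injective f)
    (hg : Function.Surjective g) (hfg : Function.Exact f g) :
    associatedPrimes R B ⊆ associatedPrimes R A ∪ associatedPrimes R C := by
  intro P hP
  rcases aux_ass_subset_union (LinearMap.range f) hP with h | h
  · left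
    exact (LinearEquiv.AssociatedPrimes.eq
      (LinearEquiv.ofInjective f hf)).symm ▸ h
  · right
    have hker : LinearMap.ker g = LinearMap.range f := hfg.linearMap_ker_eq
    rw [← hker] at h
    exact (LinearEquiv.AssociatedPrimes.eq (g.quotKerEquivOfSurjective hg)).symm ▸ h

end General

section Finiteness

variable {R : Type*} [CommRing R] {M : Type*} [AddCommGroup M] [Module R M]

/-- Finiteness of associated primes of a f.g. module over a Noetherian ring. -/
theorem aux_ass_finite [IsNoetherianRing R] [Module.Finite R M] :
    (associatedPrimes R M).Finite := by
  have hNoeth : IsNoetherian R M := inferInstance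
  by_contra hcon
  obtain ⟨N, hN, hmax⟩ := set_has_maximal_iff_noetherian.mpr hNoeth
    { N : Submodule R M | (associatedPrimes R N).Finite }
    ⟨⊥, by
      show (associatedPrimes R (⊥ : Submodule R M)).Finite
      rw [associatedPrimes.eq_empty_of_subsingleton (R := R) (M := (⊥ : Submodule R M))]
      exact Set.finite_empty⟩
  have hNtop : N ≠ ⊤ := by
    rintro rfl
    have e := LinearEquiv.AssociatedPrimes.eq (LinearEquiv.ofTop (⊤ : Submodule R M) rfl)
    exact hcon (e ▸ hN)
  have : Nontrivial (M ⧸ N) := Submodule.Quotient.nontrivial_iff.mpr hNtop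
  obtain ⟨p, hp⟩ := associatedPrimes.nonempty R (M ⧸ N)
  obtain ⟨hp_prime, xbar, hxbar⟩ := isAssociatedPrime_iff.mp hp
  have hx0 : xbar ≠ 0 := by
    rintro rfl
    have h1 : (1 : R) ∈ p := by
      rw [hxbar, Submodule.mem_colon_singleton, smul_zero]; exact Submodule.zero_mem _
    exact hp_prime.ne_top ((Ideal.eq_top_iff_one _).mpr h1)
  -- N' = preimage of span {xbar}
  set N' : Submodule R M := Submodule.comap N.mkQ (R ∙ xbar) with hN'
  have hle : N ≤ N' := fun y hy => by
    simp only [hN', Submodule.mem_comap, Submodule.mkQ_apply]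
    rw [(Submodule.Quotient.mk_eq_zero N).mpr hy]
    try exact Submodule.zero_mem _
  have hlt : N < N' := by
    obtain ⟨x, hxeq⟩ := Submodule.mkQ_surjective N xbar
    refine lt_of_le_of_ne hle (fun heq => hx0 ?_)
    have hxN' : x ∈ N' := by
      simp only [hN', Submodule.mem_comap, Submodule.mkQ_apply, hxeq]
      exact Submodule.mem_span_singleton_self xbar
    rw [← heq] at hxN'
    rw [← hxeq, Submodule.mkQ_apply, Submodule.Quotient.mk_eq_zero]
    exact hxN'
  -- the quotient map N' → M/N restricted
  set φ : N' →ₗ[R] (M ⧸ N) := N.mkQ.comp N'.subtype with hφ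
  have hrange : LinearMap.range φ = R ∙ xbar := by
    rw [hφ, LinearMap.range_comp, Submodule.range_subtype, hN',
      Submodule.map_comap_eq_of_surjective (Submodule.mkQ_surjective N)]
  have hker : LinearMap.ker φ = LinearMap.range (Submodule.inclusion hle) := by
    rw [hφ, LinearMap.ker_comp, Submodule.ker_mkQ, Submodule.range_inclusion]
    try rfl
  -- Ass N' ⊆ Ass N ∪ Ass (range φ)
  have hsub : associatedPrimes R N' ⊆
      associatedPrimes R N ∪ associatedPrimes R (LinearMap.range φ) := by
    refine aux_ass_subset_of_exact (Submodule.inclusion hle) φ.rangeRestrict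
      (Submodule.inclusion_injective hle) (LinearMap.surjective_rangeRestrict φ) ?_
    rw [LinearMap.exact_iff, LinearMap.ker_rangeRestrict, hker]
    try rfl
  -- range φ ≅ R ⧸ p
  have hkerspan : LinearMap.ker (LinearMap.toSpanSingleton R (M ⧸ N) xbar) = p := by
    ext r
    rw [LinearMap.mem_ker, LinearMap.toSpanSingleton_apply, hxbar,
      Submodule.mem_colon_singleton, Submodule.mem_bot]
  have heqv : (R ⧸ p) ≃ₗ[R] LinearMap.range φ := by
    refine (Submodule.quotEquivOfEq _ _ hkerspan.symm).trans
      ((LinearMap.toSpanSingleton R (M ⧸ N) xbar).quotKerEquivRange.trans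
        (LinearEquiv.ofEq _ _ ?_))
    rw [← LinearMap.span_singleton_eq_range, hrange]
  have hassq : associatedPrimes R (LinearMap.range φ) = {p} := by
    rw [← LinearEquiv.AssociatedPrimes.eq heqv]
    rw [associatedPrimes.eq_singleton_of_isPrimary hp_prime.isPrimary,
      hp_prime.radical]
  have hfin' : (associatedPrimes R N').Finite :=
    Set.Finite.subset (hN.union (hassq ▸ Set.finite_singleton p)) hsub
  exact hmax N' hfin' hlt

end Finiteness

section Flat

variable {R : Type u} {S : Type v} [CommRing R] [CommRing S] [Algebra R S] [Module.Flat R S]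


section Tors
variable {A : Type*} [AddCommGroup A] [Module R A]

/-- If every element of a finite module is torsion w.r.t. a prime `p`,
then a single `t ∉ p` kills the module. -/
theorem aux_tors [Module.Finite R A] (p : Ideal R) (hp : p.IsPrime)
    (h : ∀ a : A, ∃ t ∉ p, t • a = 0) : ∃ t ∉ p, ∀ a : A, t • a = 0 := by
  obtain ⟨n, s, hs⟩ := Module.Finite.exists_fin (R := R) (M := A)
  choose tf htf1 htf2 using h
  refine ⟨∏ i : Fin n, tf (s i), ?_, ?_⟩
  · intro hmem
    obtain ⟨i, -, hi⟩ := Ideal.IsPrime.prod_mem_iff.mp hmem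
    exact htf1 (s i) hi
  · intro a
    have ha : a ∈ Submodule.span R (Set.range s) := hs ▸ Submodule.mem_top
    induction ha using Submodule.span_induction with
    | mem x hx =>
      obtain ⟨i, rfl⟩ := hx
      rw [← Finset.mul_prod_erase Finset.univ _ (Finset.mem_univ i), mul_comm, mul_smul,
        htf2 (s i), smul_zero]
    | zero => rw [smul_zero]
    | add x y _ _ hx hy => rw [smul_add, hx, hy, add_zero]
    | smul r x _ hx => rw [smul_comm, hx, smul_zero]

/-- If `t` kills `A`, then `t` kills `S ⊗ A`. -/
theorem aux_kills (t : R) (h : ∀ a : A, t • a = 0) (v : S ⊗[R] A) : t • v = 0 := by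
  induction v with
  | zero => rw [smul_zero]
  | tmul s a => rw [smul_tmul', smul_tmul, h a, tmul_zero]
  | add x y hx hy => rw [smul_add, hx, hy, add_zero]

end Tors

section KeyLemma

variable {E : Type w} [AddCommGroup E] [Module R E]

/-- Key lemma: the contraction of an associated prime of `S ⊗ E` is an associated prime of `E`,
and `P` is an associated prime of `S ⊗ K'` for some f.g. submodule `K'` killed by `p`. -/
theorem aux_key [IsNoetherianRing R] [IsNoetherianRing S] {P : Ideal S}
    (h : IsAssociatedPrime P (S ⊗[R] E)) :
    P.comap (algebraMap R S) ∈ associatedPrimes R E ∧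
      ∃ K' : Submodule R E, K'.FG ∧ (∀ y ∈ K', ∀ r ∈ P.comap (algebraMap R S), r • y = 0) ∧
        IsAssociatedPrime P (S ⊗[R] K') := by
  classical
  obtain ⟨hP_prime, z, hz⟩ := isAssociatedPrime_iff.mp h
  set p := P.comap (algebraMap R S) with hpdef
  have hp_prime : p.IsPrime := by have := hP_prime; exact Ideal.IsPrime.comap (algebraMap R S)
  have hmemP : ∀ σ : S, σ ∈ P ↔ σ • z = 0 := fun σ => by
    rw [hz, Submodule.mem_colon_singleton, Submodule.mem_bot]
  have hmemp : ∀ t : R, t ∈ p ↔ t • z = 0 := fun t => by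
    rw [hpdef, Ideal.mem_comap, hmemP, algebraMap_smul]
  -- generators of p
  obtain ⟨s, hs⟩ : p.FG := IsNoetherian.noetherian p
  -- the map g : E → (s → E), x ↦ (r • x)
  set g : E →ₗ[R] (↥s → E) := LinearMap.pi (fun i => (i : R) • LinearMap.id) with hg
  have hgz : (g.baseChange S) z = 0 := by
    have key : ∀ v : S ⊗[R] E,
        piRight R S S (fun _ : ↥s => E) ((g.baseChange S) v) =
          (fun i : ↥s => (i : R) • v) := by
      intro v
      induction v with
      | zero =>
        rw [map_zero, map_zero]
        ext i
        rw [smul_zero]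
        rfl
      | tmul σ x =>
        rw [LinearMap.baseChange_tmul, piRight_apply, piRightHom_tmul]
        ext i
        show σ ⊗ₜ[R] (g x i) = (i : R) • σ ⊗ₜ[R] x
        have : g x i = (i : R) • x := rfl
        rw [this, smul_tmul', smul_tmul]
      | add x y hx hy =>
        rw [map_add, map_add]
        ext i
        rw [Pi.add_apply, congrFun hx i, congrFun hy i, smul_add]
    have h0 : (fun i : ↥s => (i : R) • z) = 0 := by
      ext i
      have : (i : R) ∈ p := hs ▸ Submodule.subset_span i.2
      exact (hmemp _).mp this
    refine (LinearEquiv.map_eq_zero_iff (piRight R S S (fun _ : ↥s => E))).mp ?_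
    rw [key z]
    exact h0
  -- exactness: z comes from S ⊗ ker g
  have hexact : Function.Exact ((LinearMap.ker g).subtype.lTensor S) (g.lTensor S) :=
    Module.Flat.lTensor_exact S (LinearMap.exact_subtype_ker_map g)
  obtain ⟨w, hw⟩ : ∃ w, ((LinearMap.ker g).subtype.lTensor S) w = z := by
    have := (hexact z).mp ?_
    · exact this
    · rw [← LinearMap.baseChange_eq_ltensor]
      exact hgz
  -- every element of ker g is killed by p
  have hkerkill : ∀ y : E, y ∈ LinearMap.ker g → ∀ r ∈ p, r • y = 0 := by
    intro y hy r hr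
    rw [← hs] at hr
    induction hr using Submodule.span_induction with
    | mem t ht =>
      have h2 := congrFun (show g y = 0 from hy) ⟨t, ht⟩
      simpa [hg] using h2
    | zero => rw [zero_smul]
    | add a b _ _ ha hb => rw [add_smul, ha, hb, add_zero]
    | smul a b _ hb => rw [smul_eq_mul, mul_smul, hb, smul_zero]
  -- extract a f.g. submodule K' from a representation of w
  obtain ⟨T, hT⟩ := TensorProduct.exists_finset w
  set K' : Submodule R E := Submodule.map (LinearMap.ker g).subtype
    (Submodule.span R (↑(T.image Prod.snd) : Set ↥(LinearMap.ker g))) with hK'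
  have hK'fg : K'.FG := Submodule.FG.map _ ⟨T.image Prod.snd, rfl⟩
  have hK'le : ∀ y ∈ K', y ∈ LinearMap.ker g := by
    intro y hy
    obtain ⟨y', -, rfl⟩ := hy
    exact y'.2
  have hK'kill : ∀ y ∈ K', ∀ r ∈ p, r • y = 0 := fun y hy => hkerkill y (hK'le y hy)
  -- the witness in S ⊗ K'
  have hmemK' : ∀ j ∈ T, ((j.2 : E)) ∈ K' := by
    intro j hj
    exact Submodule.mem_map_of_mem (Submodule.subset_span
      (Finset.mem_coe.mpr (Finset.mem_image_of_mem Prod.snd hj)))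
  set w' : S ⊗[R] K' := ∑ j ∈ T.attach, j.1.1 ⊗ₜ[R]
    (⟨((j.1.2 : E)), hmemK' j.1 j.2⟩ : K') with hw'
  have hw'z : (K'.subtype.baseChange S) w' = z := by
    rw [hw', map_sum]
    rw [← hw, hT, map_sum]
    rw [← Finset.sum_attach T (fun j => ((LinearMap.ker g).subtype.lTensor S) (j.1 ⊗ₜ[R] j.2))]
    refine Finset.sum_congr rfl fun j _ => ?_
    rw [LinearMap.baseChange_tmul]
    rw [← LinearMap.baseChange_eq_ltensor, LinearMap.baseChange_tmul]
    rfl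
  have hinj : Function.Injective (K'.subtype.baseChange S) := by
    rw [LinearMap.baseChange_eq_ltensor]
    exact Module.Flat.lTensor_preserves_injective_linearMap _ K'.injective_subtype
  have hannw' : P = Submodule.colon ⊥ {w'} := by
    rw [hz]
    ext σ
    rw [Submodule.mem_colon_singleton, Submodule.mem_bot, Submodule.mem_colon_singleton,
      Submodule.mem_bot]
    constructor
    · intro hσ
      apply hinj
      rw [map_smul, hw'z, map_zero]
      exact hσ
    · intro hσ
      rw [← hw'z, ← map_smul, hσ, map_zero]
  have hPK' : IsAssociatedPrime P (S ⊗[R] K') := isAssociatedPrime_iff.mpr ⟨hP_prime, w', hannw'⟩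
  refine ⟨?_, K', hK'fg, hK'kill, hPK'⟩
  -- p is an associated prime of E
  by_cases hcase : ∃ y ∈ K', ∀ t : R, t • y = 0 → t ∈ p
  · obtain ⟨y, hyK', hy⟩ := hcase
    refine isAssociatedPrime_iff.mpr ⟨hp_prime, y, ?_⟩
    ext t
    rw [Submodule.mem_colon_singleton, Submodule.mem_bot]
    exact ⟨fun ht => hK'kill y hyK' t ht, hy t⟩
  · exfalso
    push_neg at hcase
    have : Module.Finite R K' := Module.Finite.iff_fg.mpr hK'fg
    have htors : ∀ a : K', ∃ t ∉ p, t • a = 0 := by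
      rintro ⟨a, ha⟩
      obtain ⟨t, ht0, htp⟩ := hcase a ha
      exact ⟨t, htp, Subtype.ext ht0⟩
    obtain ⟨t, htp, ht⟩ := aux_tors p hp_prime htors
    apply htp
    rw [hmemp]
    rw [← hw'z, ← map_smul_of_tower, aux_kills t ht w', map_zero]

end KeyLemma

section Claim


theorem aux_subsingleton_tensor {Q : Type*} [AddCommGroup Q] [Module R Q]
    (h : ∀ q : Q, q = 0) (v : S ⊗[R] Q) : v = 0 := by
  induction v with
  | zero => rfl
  | tmul s q => rw [h q, tmul_zero]
  | add x y hx hy => rw [hx, hy, add_zero]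

/-- Splitting of associated primes along a flat base change of a submodule. -/
theorem aux_split {Q : Type*} [AddCommGroup Q] [Module R Q] (A : Submodule R Q) {P : Ideal S}
    (h : IsAssociatedPrime P (S ⊗[R] Q)) :
    IsAssociatedPrime P (S ⊗[R] A) ∨ IsAssociatedPrime P (S ⊗[R] (Q ⧸ A))  := by
  have hinj : Function.Injective (A.subtype.baseChange S) := by
    rw [LinearMap.baseChange_eq_ltensor]
    exact Module.Flat.lTensor_preserves_injective_linearMap _ A.injective_subtype
  have hsurj : Function.Surjective (A.mkQ.baseChange S) := by
    rw [LinearMap.baseChange_eq_ltensor]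
    exact LinearMap.lTensor_surjective S (Submodule.mkQ_surjective A)
  have hexact : Function.Exact (A.subtype.baseChange S) (A.mkQ.baseChange S) := by
    have h := Module.Flat.lTensor_exact S (LinearMap.exact_subtype_mkQ A)
    rwa [← LinearMap.baseChange_eq_ltensor, ← LinearMap.baseChange_eq_ltensor] at h
  rcases aux_ass_subset_of_exact (A.subtype.baseChange S) (A.mkQ.baseChange S)
    hinj hsurj hexact h with h' | h'
  · exact Or.inl h'
  · exact Or.inr h'

theorem aux_claim [IsNoetherianRing R] (p : Ideal R) (hp : p.IsPrime) (P : Ideal S)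
    (hPp : P.comap (algebraMap R S) = p) :
    ∀ (n : ℕ) (Q : Type w) [AddCommGroup Q] [Module R Q],
      ∀ _f : Fin n → Q, Submodule.span R (Set.range _f) = ⊤ →
      (∀ r ∈ p, ∀ q : Q, r • q = 0) →
      IsAssociatedPrime P (S ⊗[R] Q) → IsAssociatedPrime P (S ⊗[R] (R ⧸ p)) := by
  have hone : (1 : R) ∉ p := fun h1 => hp.ne_top (p.eq_top_of_isUnit_mem h1 isUnit_one)
  intro n
  induction n with
  | zero =>
    intro Q _ _ f hspan hkill hP
    exfalso
    have h0 : ∀ q : Q, q = 0 := by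
      intro q
      have : q ∈ (⊤ : Submodule R Q) := Submodule.mem_top
      rw [← hspan, Set.range_eq_empty f, Submodule.span_empty] at this
      exact this
    have : Subsingleton (S ⊗[R] Q) :=
      ⟨fun a b => by rw [aux_subsingleton_tensor h0 a, aux_subsingleton_tensor h0 b]⟩
    exact not_isAssociatedPrime_of_subsingleton hP
  | succ n ih =>
    intro Q _ _ f hspan hkill hP
    -- the p-torsion submodule
    set T : Submodule R Q :=
      { carrier := {q | ∃ t ∉ p, t • q = 0}
        add_mem' := by
          rintro a b ⟨t₁, ht₁, h₁⟩ ⟨t₂, ht₂, h₂⟩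
          refine ⟨t₁ * t₂, fun hm => ?_, ?_⟩
          · rcases hp.mem_or_mem hm with hm | hm
            exacts [ht₁ hm, ht₂ hm]
          · have e₁ : (t₁ * t₂) • a = 0 := by rw [mul_comm, mul_smul, h₁, smul_zero]
            have e₂ : (t₁ * t₂) • b = 0 := by rw [mul_smul, h₂, smul_zero]
            rw [smul_add, e₁, e₂, add_zero]
        zero_mem' := ⟨1, hone, smul_zero 1⟩
        smul_mem' := by
          rintro r a ⟨t, ht, h⟩
          exact ⟨t, ht, by rw [smul_comm, h, smul_zero]⟩ } with hT
    have hQfin : Module.Finite R Q := by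
      rw [Module.finite_def, ← hspan]
      exact ⟨(Set.finite_range f).toFinset, by rw [Set.Finite.coe_toFinset]⟩
    have hQnoeth : IsNoetherian R Q := isNoetherian_of_isNoetherianRing_of_finite R Q
    rcases aux_split T hP with hT' | hQ'
    · -- torsion case: contradiction
      exfalso
      have : Module.Finite R T := Module.Finite.iff_fg.mpr (IsNoetherian.noetherian T)
      have htors : ∀ a : T, ∃ t ∉ p, t • a = 0 := by
        rintro ⟨a, t, ht, h⟩
        exact ⟨t, ht, Subtype.ext h⟩
      obtain ⟨t, htp, ht⟩ := aux_tors p hp htors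
      obtain ⟨-, v, hv⟩ := hT'
      apply htp
      rw [← hPp, Ideal.mem_comap, hv]
      apply Ideal.le_radical
      rw [Submodule.mem_colon_singleton, Submodule.mem_bot, algebraMap_smul]
      exact aux_kills t ht v
    · -- torsion-free quotient
      set f' : Fin (n + 1) → Q ⧸ T := fun i => T.mkQ (f i) with hf'
      have hspan' : Submodule.span R (Set.range f') = ⊤ := by
        have : Set.range f' = T.mkQ '' Set.range f := Set.range_comp T.mkQ f
        rw [this, Submodule.span_image, hspan, Submodule.map_top, Submodule.range_mkQ]
      have hkill' : ∀ r ∈ p, ∀ q' : Q ⧸ T, r • q' = 0 := by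
        intro r hr q'
        obtain ⟨q, rfl⟩ := Submodule.mkQ_surjective T q'
        rw [← map_smul, hkill r hr q, map_zero]
      have htf : ∀ q' : Q ⧸ T, ∀ t ∉ p, t • q' = 0 → q' = 0 := by
        intro q' t htp h0
        obtain ⟨q, rfl⟩ := Submodule.mkQ_surjective T q'
        rw [← map_smul, Submodule.mkQ_apply, Submodule.Quotient.mk_eq_zero] at h0
        obtain ⟨t', ht', h'⟩ := h0
        rw [Submodule.mkQ_apply, Submodule.Quotient.mk_eq_zero]
        refine ⟨t' * t, fun hm => ?_, by rw [mul_smul]; exact h'⟩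
        rcases hp.mem_or_mem hm with hm | hm
        exacts [ht' hm, htp hm]
      set Q₁ : Submodule R (Q ⧸ T) := R ∙ f' 0 with hQ₁
      rcases aux_split Q₁ hQ' with h1 | h2
      · -- the cyclic piece: isomorphic to R ⧸ p
        by_cases hf0 : f' 0 = 0
        · exfalso
          have h0 : ∀ q : Q₁, q = 0 := by
            rintro ⟨q, hq⟩
            rw [hQ₁, hf0, Submodule.span_zero_singleton] at hq
            exact Subtype.ext hq
          have : Subsingleton (S ⊗[R] Q₁) :=
            ⟨fun a b => by rw [aux_subsingleton_tensor h0 a, aux_subsingleton_tensor h0 b]⟩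
          exact not_isAssociatedPrime_of_subsingleton h1
        · have hker : LinearMap.ker (LinearMap.toSpanSingleton R (Q ⧸ T) (f' 0)) = p := by
            ext r
            rw [LinearMap.mem_ker, LinearMap.toSpanSingleton_apply]
            constructor
            · intro h0
              by_contra hrp
              exact hf0 (htf (f' 0) r hrp h0)
            · intro hr
              exact hkill' r hr (f' 0)
          have e : (R ⧸ p) ≃ₗ[R] Q₁ := by
            refine (Submodule.quotEquivOfEq _ _ hker.symm).trans
              ((LinearMap.toSpanSingleton R (Q ⧸ T) (f' 0)).quotKerEquivRange.trans
                (LinearEquiv.ofEq _ _ ?_))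
            rw [← LinearMap.span_singleton_eq_range, hQ₁]
          exact (LinearEquiv.isAssociatedPrime_iff (e.baseChange R S _ _)).mpr h1
      · -- the remaining quotient: induction
        set f'' : Fin n → (Q ⧸ T) ⧸ Q₁ := fun i => Q₁.mkQ (f' i.succ) with hf''
        have hspan'' : Submodule.span R (Set.range f'') = ⊤ := by
          apply le_antisymm le_top
          have h1 : (⊤ : Submodule R ((Q ⧸ T) ⧸ Q₁)) = Submodule.map Q₁.mkQ ⊤ := by
            rw [Submodule.map_top, Submodule.range_mkQ]
          rw [h1, ← hspan', Submodule.map_span, Submodule.span_le]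
          rintro y ⟨y', ⟨i, rfl⟩, rfl⟩
          refine Fin.cases ?_ ?_ i
          · have hm : f' 0 ∈ Q₁ := Submodule.mem_span_singleton_self _
            show Q₁.mkQ (f' 0) ∈ _
            rw [Submodule.mkQ_apply, (Submodule.Quotient.mk_eq_zero Q₁).mpr hm]
            exact Submodule.zero_mem _
          · intro j
            exact Submodule.subset_span ⟨j, rfl⟩
        have hkill'' : ∀ r ∈ p, ∀ q : (Q ⧸ T) ⧸ Q₁, r • q = 0 := by
          intro r hr q
          obtain ⟨q', rfl⟩ := Submodule.mkQ_surjective Q₁ q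
          rw [← map_smul, hkill' r hr q', map_zero]
        exact ih ((Q ⧸ T) ⧸ Q₁) f'' hspan'' hkill'' h2

end Claim

end Flat

theorem flat_associatedPrimes_finite_of_finite
    (R : Type u) (S : Type v) [CommRing R] [CommRing S]
    [IsNoetherianRing R] [IsNoetherianRing S] [Algebra R S] [Module.Flat R S]
    (E : Type w) [AddCommGroup E] [Module R E]
    (h : (associatedPrimes R E).Finite) :
    (associatedPrimes S (TensorProduct R S E)).Finite := by
  have hsub : associatedPrimes S (TensorProduct R S E) ⊆
      ⋃ p ∈ associatedPrimes R E, associatedPrimes S (TensorProduct R S (R ⧸ p)) := by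
    intro P hP
    obtain ⟨hpAss, K', hfg, hkill, hPK'⟩ := aux_key hP
    have : Module.Finite R K' := Module.Finite.iff_fg.mpr hfg
    obtain ⟨n, f, hf⟩ := Module.Finite.exists_fin (R := R) (M := K')
    have hp_prime : (P.comap (algebraMap R S)).IsPrime := hpAss.isPrime
    have hkill' : ∀ r ∈ P.comap (algebraMap R S), ∀ q : K', r • q = 0 := fun r hr q =>
      Subtype.ext (hkill q.1 q.2 r hr)
    have hmem : P ∈ associatedPrimes S (TensorProduct R S (R ⧸ P.comap (algebraMap R S))) :=
      aux_claim _ hp_prime P rfl n K' f hf hkill' hPK'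
    exact Set.mem_biUnion hpAss hmem
  refine Set.Finite.subset (Set.Finite.biUnion h fun p hp => ?_) hsub
  have : Module.Finite R (R ⧸ p) := Module.Finite.of_surjective p.mkQ (Submodule.mkQ_surjective p)
  exact aux_ass_finite
end

section
/- Let R → S be a homomorphism of Noetherian rings such that S is flat as an R-module, and let E be an R-module. If Ass_S(E ⊗_R S) is finite and only finitely many primes p ∈ Ass_R(E) satisfy pS = S (i.e., pS is not a proper ideal of S), then Ass_R(E) is finite. -/
/- STATEMENT 1: If `R → S` is a homomorphism of Noetherian rings with `S` flat over `R`, `E` an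
`R`-module such that `Ass_S (E ⊗_R S)` is finite and only finitely many primes
`p ∈ Ass_R E` satisfy `pS = S`, then `Ass_R E` is finite. -/

universe u v w

open TensorProduct

lemma key_exists_assoc_over
    (R : Type u) (S : Type v) [CommRing R] [CommRing S]
    [IsNoetherianRing R] [IsNoetherianRing S] [Algebra R S] [Module.Flat R S]
    (E : Type w) [AddCommGroup E] [Module R E]
    (p : Ideal R) (hp : p ∈ associatedPrimes R E)
    (hne : Ideal.map (algebraMap R S) p ≠ ⊤) :
    ∃ q ∈ associatedPrimes S (TensorProduct R S E),
      Ideal.comap (algebraMap R S) q = p := by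
  obtain ⟨hp1, x, hx⟩ := isAssociatedPrime_iff.mp hp
  rw [Submodule.bot_colon'] at hx
  -- the injection R⧸p ↪ E
  have hker : LinearMap.ker (LinearMap.toSpanSingleton R E x) = p := by
    ext r
    rw [LinearMap.mem_ker, hx, Submodule.mem_annihilator_span_singleton]
    rfl
  let f : (R ⧸ p) →ₗ[R] E :=
    Submodule.liftQ (p : Submodule R R) (LinearMap.toSpanSingleton R E x) hker.ge
  have hf : Function.Injective f :=
    LinearMap.ker_eq_bot.mp (Submodule.ker_liftQ_eq_bot _ _ _ hker.le)
  -- base change to S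
  let g : (S ⊗[R] (R ⧸ p)) →ₗ[S] (S ⊗[R] E) := f.baseChange S
  have hg : Function.Injective g := by
    have h1 : Function.Injective (f.lTensor S) :=
      Module.Flat.lTensor_preserves_injective_linearMap (M := S) f hf
    have : (g : S ⊗[R] (R ⧸ p) → S ⊗[R] E) = f.lTensor S :=
      LinearMap.baseChange_eq_ltensor f
    rw [show (⇑g) = ⇑(f.lTensor S) from this]
    exact h1
  -- S ⊗ (R⧸p) is nontrivial
  have hlt : (p • (⊤ : Submodule R S)) < ⊤ := by
    rw [Ideal.smul_top_eq_map]
    refine lt_top_iff_ne_top.mpr ?_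
    intro h
    apply hne
    rw [eq_top_iff]
    intro s _
    have : s ∈ (Ideal.map (algebraMap R S) p).restrictScalars R := h ▸ trivial
    exact this
  haveI : Nontrivial (S ⧸ (p • (⊤ : Submodule R S))) :=
    Submodule.Quotient.nontrivial_iff.mpr hlt.ne
  haveI : Nontrivial (S ⊗[R] (R ⧸ p)) :=
    (TensorProduct.tensorQuotEquivQuotSMul S (p : Ideal R)).toEquiv.nontrivial
  obtain ⟨q, hq⟩ := associatedPrimes.nonempty S (S ⊗[R] (R ⧸ p))
  refine ⟨q, associatedPrimes.subset_of_injective (f := g) hg hq, ?_⟩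
  obtain ⟨hq1, y, hy⟩ := isAssociatedPrime_iff.mp hq
  rw [Submodule.bot_colon'] at hy
  have hy0 : y ≠ 0 := by
    rintro rfl
    apply hq1.ne_top
    rw [hy, Submodule.span_singleton_eq_bot.mpr rfl, Submodule.annihilator_bot]
  -- multiplication by r on S ⊗ (R⧸p) equals lTensor of multiplication by r on R⧸p
  have key : ∀ r : R, r • y = (LinearMap.lTensor S
      (DistribMulAction.toLinearMap R (R ⧸ p) r)) y := by
    intro r
    erw [LinearMap.lTensor_smul_action]
    rfl
  ext r
  simp only [Ideal.mem_comap]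
  rw [hy, Submodule.mem_annihilator_span_singleton, algebraMap_smul]
  constructor
  · intro hry
    by_contra hr
    -- multiplication by r is injective on R⧸p
    have hinj : Function.Injective (DistribMulAction.toLinearMap R (R ⧸ p) r) := by
      rw [← LinearMap.ker_eq_bot, eq_bot_iff]
      rintro z hz
      obtain ⟨a, rfl⟩ := Ideal.Quotient.mk_surjective (I := p) z
      have : (Ideal.Quotient.mk p) (r * a) = 0 := hz
      rw [Ideal.Quotient.eq_zero_iff_mem] at this
      have ha : a ∈ p := (hp1.mem_or_mem this).resolve_left hr
      simpa [Submodule.mem_bot, Ideal.Quotient.eq_zero_iff_mem] using ha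
    have hinj2 : Function.Injective
        ((DistribMulAction.toLinearMap R (R ⧸ p) r).lTensor S) :=
      Module.Flat.lTensor_preserves_injective_linearMap (M := S) _ hinj
    apply hy0
    apply hinj2
    rw [← key r, hry, map_zero]
  · intro hr
    rw [key r]
    have hz : (DistribMulAction.toLinearMap R (R ⧸ p) r) = 0 := by
      refine LinearMap.ext fun z => ?_
      obtain ⟨a, rfl⟩ := Ideal.Quotient.mk_surjective (I := p) z
      show (Ideal.Quotient.mk p) (r * a) = 0
      rw [Ideal.Quotient.eq_zero_iff_mem]
      exact Ideal.mul_mem_right a p hr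
    rw [hz, LinearMap.lTensor_zero, LinearMap.zero_apply]

theorem flat_associatedPrimes_finite_of_extension_finite
    (R : Type u) (S : Type v) [CommRing R] [CommRing S]
    [IsNoetherianRing R] [IsNoetherianRing S] [Algebra R S] [Module.Flat R S]
    (E : Type w) [AddCommGroup E] [Module R E]
    (hfin : (associatedPrimes S (TensorProduct R S E)).Finite)
    (hext : {p ∈ associatedPrimes R E | Ideal.map (algebraMap R S) p = ⊤}.Finite) :
    (associatedPrimes R E).Finite := by
  set B := {p ∈ associatedPrimes R E | Ideal.map (algebraMap R S) p ≠ ⊤} with hB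
  have hmem : ∀ p ∈ B, ∃ q ∈ associatedPrimes S (TensorProduct R S E),
      Ideal.comap (algebraMap R S) q = p := fun p hp =>
    key_exists_assoc_over R S E p hp.1 hp.2
  choose! F hF1 hF2 using hmem
  have hBfin : B.Finite := by
    apply Set.Finite.of_finite_image (f := F) (hfin.subset ?_) ?_
    · rintro _ ⟨p, hp, rfl⟩
      exact hF1 p hp
    · intro p1 hp1 p2 hp2 heq
      rw [← hF2 p1 hp1, ← hF2 p2 hp2, heq]
  have : associatedPrimes R E ⊆
      {p ∈ associatedPrimes R E | Ideal.map (algebraMap R S) p = ⊤} ∪ B := by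
    intro p hp
    by_cases h : Ideal.map (algebraMap R S) p = ⊤
    · exact Or.inl ⟨hp, h⟩
    · exact Or.inr ⟨hp, h⟩
  exact (hext.union hBfin).subset this
end

section
/- Let R be a Noetherian ring and M an R-module. Suppose that Ass_R(M_f) is finite for every non-unit f ∈ R, where M_f denotes the localization of M at the powers of f. Then Ass_R(M) is finite. -/
/- STATEMENT 8: Let `R` be Noetherian and `M` an `R`-module. If `Ass_R (M_f)` is finite for
every non-unit `f ∈ R` (with `M_f` the localization of `M` at the powers of `f`, viewed as an
`R`-module), then `Ass_R M` is finite. -/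

universe u v

/-- If `p` is an associated prime of `M` and `f ∉ p`, then `p` is an associated prime of
the localized module `M_f` (viewed as an `R`-module). -/
lemma mem_associatedPrimes_localizedModule_of_not_mem
    {R : Type u} [CommRing R] [IsNoetherianRing R] {M : Type v} [AddCommGroup M] [Module R M]
    {f : R} {p : Ideal R} (hp : p ∈ associatedPrimes R M) (hf : f ∉ p) :
    p ∈ associatedPrimes R (LocalizedModule (Submonoid.powers f) M) := by
  obtain ⟨hprime, x, hx⟩ := isAssociatedPrime_iff.mp hp
  refine isAssociatedPrime_iff.mpr ⟨hprime, LocalizedModule.mk x 1, ?_⟩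
  ext r
  rw [Submodule.mem_colon_singleton, Submodule.mem_bot, LocalizedModule.smul'_mk]
  constructor
  · intro hr
    have hrx : r • x = 0 := by
      rw [hx, Submodule.mem_colon_singleton, Submodule.mem_bot] at hr; exact hr
    rw [hrx, LocalizedModule.zero_mk]
  · intro hr
    rw [← LocalizedModule.zero_mk (1 : Submonoid.powers f), LocalizedModule.mk_eq] at hr
    obtain ⟨u, hu⟩ := hr
    simp only [one_smul, smul_zero] at hu
    obtain ⟨n, hn⟩ := u.2
    have hmem : f ^ n * r ∈ p := by
      rw [hx, Submodule.mem_colon_singleton, Submodule.mem_bot, mul_smul]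
      have : (u : R) • r • x = 0 := hu
      rw [← hn] at this
      exact this
    rcases hprime.mul_mem_iff_mem_or_mem.mp hmem with h1 | h2
    · exact absurd (hprime.mem_of_pow_mem n h1) hf
    · exact h2

theorem associatedPrimes_finite_of_localizations_finite
    (R : Type u) [CommRing R] [IsNoetherianRing R]
    (M : Type v) [AddCommGroup M] [Module R M]
    (h : ∀ f : R, ¬IsUnit f →
      (associatedPrimes R (LocalizedModule (Submonoid.powers f) M)).Finite) :
    (associatedPrimes R M).Finite := by
  by_contra hinf
  rw [← Set.not_infinite] at hinf; push_neg at hinf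
  -- the set of ideals contained in infinitely many associated primes
  set Sigma' : Set (Ideal R) :=
    {I | {p | p ∈ associatedPrimes R M ∧ I ≤ p}.Infinite} with hSigma'
  have hbot : (⊥ : Ideal R) ∈ Sigma' := by
    have : {p | p ∈ associatedPrimes R M ∧ (⊥ : Ideal R) ≤ p} = associatedPrimes R M := by
      ext p; simp
    simpa [hSigma', this] using hinf
  obtain ⟨I, hI, hImax⟩ :=
    (set_has_maximal_iff_noetherian.mpr (inferInstance : IsNoetherian R R)) Sigma' ⟨⊥, hbot⟩
  have hIinf : {p | p ∈ associatedPrimes R M ∧ I ≤ p}.Infinite := hI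
  -- every element outside `I` is a unit
  have hunits : ∀ g : R, g ∉ I → IsUnit g := by
    intro g hg
    by_contra hgu
    -- split the infinite set according to whether `g ∈ p`
    have hsplit : {p | p ∈ associatedPrimes R M ∧ I ≤ p} =
        {p | p ∈ associatedPrimes R M ∧ I ≤ p ∧ g ∈ p} ∪
        {p | p ∈ associatedPrimes R M ∧ I ≤ p ∧ g ∉ p} := by
      ext p
      by_cases hgp : g ∈ p <;> simp [hgp] <;> tauto
    rw [hsplit, Set.infinite_union] at hIinf
    rcases hIinf with h1 | h2
    · -- contradicts maximality of `I`
      have hlt : I < I ⊔ Ideal.span {g} := by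
        refine lt_of_le_of_ne le_sup_left fun e => hg ?_
        rw [e]
        exact (le_sup_right : Ideal.span {g} ≤ _) (Ideal.mem_span_singleton_self g)
      have hmem : I ⊔ Ideal.span {g} ∈ Sigma' := by
        refine h1.mono ?_
        rintro p ⟨hp, hIp, hgp⟩
        exact ⟨hp, sup_le hIp ((Ideal.span_singleton_le_iff_mem p).mpr hgp)⟩
      exact hImax _ hmem hlt
    · -- contradicts finiteness of `Ass (M_g)`
      have hsub : {p | p ∈ associatedPrimes R M ∧ I ≤ p ∧ g ∉ p} ⊆
          associatedPrimes R (LocalizedModule (Submonoid.powers g) M) := by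
        rintro p ⟨hp, _, hgp⟩
        exact mem_associatedPrimes_localizedModule_of_not_mem hp hgp
      exact (h2.mono hsub) (h g hgu)
  -- hence every associated prime containing `I` equals `I`
  have hsub : {p | p ∈ associatedPrimes R M ∧ I ≤ p} ⊆ {I} := by
    rintro p ⟨hp, hIp⟩
    have hprime := hp.isPrime
    have : p ≤ I := by
      intro y hy
      by_contra hyI
      exact hprime.ne_top (Ideal.eq_top_of_isUnit_mem p hy (hunits y hyI))
    exact le_antisymm this hIp
  exact hIinf ((Set.finite_singleton I).subset hsub)
end

section
/- Let (R, m) be a Noetherian local ring and let R → S be a cyclically pure ring extension of Noetherian rings. Let R̂ denote the m-adic completion of R. Then the induced map R̂ → S ⊗_R R̂ is also cyclically pure, i.e., for every ideal I ⊆ R̂ one has I·(S ⊗_R R̂) ∩ R̂ = I. -/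
/- STATEMENT 14: Let `(R, m)` be a Noetherian local ring and `R → S` a cyclically pure ring
extension of Noetherian rings. Then the induced map `R̂ → S ⊗_R R̂` is cyclically pure, i.e.
`I·(S ⊗_R R̂) ∩ R̂ = I` for every ideal `I ⊆ R̂`. Here `R̂` is the `m`-adic completion of `R`
and `S ⊗_R R̂` is realized as `R̂ ⊗[R] S` with its `R̂`-algebra structure. -/

universe u

universe v

set_option linter.unusedVariables false

open Submodule

section ML

variable {R : Type u} [Ring R]

/-- Stabilization of eventually-antitone chains of submodules of an Artinian module. -/
private lemma stab_aux {B : Type v} [AddCommGroup B] [Module R B] [IsArtinian R B]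
    (n₀ : ℕ) (g : ℕ → Submodule R B) (hg : ∀ j j', n₀ ≤ j → j ≤ j' → g j' ≤ g j) :
    ∃ N, n₀ ≤ N ∧ ∀ j, N ≤ j → g j = g N := by
  obtain ⟨N, hN⟩ := IsArtinian.monotone_stabilizes (R := R) (M := B)
    ⟨fun k => OrderDual.toDual (g (n₀ + k)),
      fun k k' hk => OrderDual.toDual_le_toDual.mpr
        (hg _ _ (Nat.le_add_right _ _) (by omega))⟩
  refine ⟨n₀ + N, Nat.le_add_right _ _, fun j hj => ?_⟩
  have h1 := hN (j - n₀) (by omega)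
  have h2 : g (n₀ + N) = g (n₀ + (j - n₀)) := congrArg OrderDual.ofDual h1
  have e : n₀ + (j - n₀) = j := by omega
  rw [e] at h2
  exact h2.symm

/-- Mittag-Leffler style lemma: a tower of nonempty "affine" subsets (cosets of
submodules `K n` centered at `a n`) of Artinian modules, compatible under the
transition maps `π`, admits a compatible section. -/
private theorem ml_exists_compatible
    (A : ℕ → Type v) [∀ n, AddCommGroup (A n)] [∀ n, Module R (A n)]
    [∀ n, IsArtinian R (A n)]
    (π : ∀ k n : ℕ, A n →ₗ[R] A k)
    (hid : ∀ n (x : A n), π n n x = x)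
    (hcomp : ∀ {i j k : ℕ}, i ≤ j → j ≤ k → ∀ x : A k, π i j (π j k x) = π i k x)
    (K : ∀ n, Submodule R (A n)) (a : ∀ n, A n)
    (hK : ∀ {k n : ℕ}, k ≤ n → (K n).map (π k n) ≤ K k)
    (ha : ∀ {k n : ℕ}, k ≤ n → π k n (a n) - a k ∈ K k) :
    ∃ v : ∀ n, A n, (∀ n, v n - a n ∈ K n) ∧ ∀ ⦃k n : ℕ⦄, k ≤ n → π k n (v n) = v k := by
  classical
  set M : ∀ n, ℕ → Submodule R (A n) := fun n j => (K j).map (π n j) with hM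
  set c : ∀ n, ℕ → A n := fun n j => π n j (a j) with hc
  have hπcomp' : ∀ {i j k : ℕ}, i ≤ j → j ≤ k → (π i j).comp (π j k) = π i k :=
    fun hij hjk => LinearMap.ext (hcomp hij hjk)
  have hManti : ∀ {n j j' : ℕ}, n ≤ j → j ≤ j' → M n j' ≤ M n j := by
    intro n j j' hnj hjj'
    have h1 : M n j' = Submodule.map (π n j) (Submodule.map (π j j') (K j')) := by
      rw [hM, ← Submodule.map_comp, hπcomp' hnj hjj']
    rw [h1]
    exact (Submodule.map_mono (hK hjj')).trans le_rfl
  have hcc : ∀ {n j j' : ℕ}, n ≤ j → j ≤ j' → c n j' - c n j ∈ M n j := by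
    intro n j j' hnj hjj'
    have h1 : c n j' = π n j (π j j' (a j')) := (hcomp hnj hjj' _).symm
    rw [h1, hc]
    simp only
    rw [← map_sub]
    exact Submodule.mem_map_of_mem (ha hjj')
  have hMn : ∀ n, M n n = K n := by
    intro n
    have : π n n = LinearMap.id := LinearMap.ext (hid n)
    rw [hM]; simp only; rw [this, Submodule.map_id]
  have hcn : ∀ n, c n n = a n := fun n => hid n (a n)
  -- the eventual coset
  set W : ∀ n, Set (A n) := fun n => {y | ∀ j, n ≤ j → y - c n j ∈ M n j} with hW
  have hWne : ∀ n, ∃ y, y ∈ W n := by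
    intro n
    obtain ⟨N, hnN, hN⟩ := stab_aux n (M n) (fun j j' h h' => hManti h h')
    refine ⟨c n N, fun j hnj => ?_⟩
    rcases le_total j N with h | h
    · exact hcc hnj h
    · have h1 := neg_mem (hcc hnN h)
      rw [neg_sub] at h1
      rw [hN j h]
      exact h1
  have hWsurj : ∀ n y, y ∈ W n → ∃ z, z ∈ W (n + 1) ∧ π n (n + 1) z = y := by
    intro n y hy
    have hDne : ∀ j, n + 1 ≤ j →
        ∃ z : A (n + 1), π n (n + 1) z = y ∧ z - c (n + 1) j ∈ M (n + 1) j := by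
      intro j hj
      have hnj : n ≤ j := by omega
      obtain ⟨w, hw, hwe⟩ := hy j hnj
      refine ⟨π (n + 1) j (a j + w), ?_, ?_⟩
      · rw [hcomp (Nat.le_succ n) hj, map_add, hwe]
        show c n j + (y - c n j) = y
        abel
      · rw [map_add]
        show π (n+1) j (a j) + π (n+1) j w - c (n+1) j ∈ M (n+1) j
        rw [hc]
        simp only
        rw [add_sub_cancel_left]
        exact Submodule.mem_map_of_mem hw
    obtain ⟨N₂, hN₂ge, hN₂⟩ := stab_aux (n + 1)
      (fun j => LinearMap.ker (π n (n + 1)) ⊓ M (n + 1) j)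
      (fun j j' h h' => inf_le_inf_left _ (hManti h h'))
    obtain ⟨z₀, hz₀π, hz₀⟩ := hDne N₂ hN₂ge
    refine ⟨z₀, fun j hj => ?_, hz₀π⟩
    rcases le_total j N₂ with h | h
    · have h1 : z₀ - c (n + 1) N₂ ∈ M (n + 1) j := hManti hj h hz₀
      have h2 := hcc hj h
      have h3 := add_mem h1 h2
      rwa [sub_add_sub_cancel] at h3
    · obtain ⟨z₁, hz₁π, hz₁⟩ := hDne j (le_trans hN₂ge h)
      have hz₁N : z₁ - c (n + 1) N₂ ∈ M (n + 1) N₂ := by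
        have h1 : z₁ - c (n + 1) j ∈ M (n + 1) N₂ := hManti hN₂ge h hz₁
        have h2 : c (n + 1) j - c (n + 1) N₂ ∈ M (n + 1) N₂ := hcc hN₂ge h
        have h3 := add_mem h1 h2
        rwa [sub_add_sub_cancel] at h3
      have hker : z₀ - z₁ ∈ LinearMap.ker (π n (n + 1)) := by
        rw [LinearMap.mem_ker, map_sub, hz₀π, hz₁π, sub_self]
      have hmem : z₀ - z₁ ∈ M (n + 1) N₂ := by
        have h1 := sub_mem hz₀ hz₁N
        rwa [sub_sub_sub_cancel_right] at h1
      have h4 : z₀ - z₁ ∈ LinearMap.ker (π n (n + 1)) ⊓ M (n + 1) j := by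
        rw [hN₂ j h]
        exact ⟨hker, hmem⟩
      have h5 := add_mem h4.2 hz₁
      rwa [sub_add_sub_cancel] at h5
  -- build the compatible section by recursion
  let F : ∀ n, {y : A n // y ∈ W n} := fun n =>
    Nat.rec ⟨(hWne 0).choose, (hWne 0).choose_spec⟩
      (fun n p => ⟨(hWsurj n p.1 p.2).choose, (hWsurj n p.1 p.2).choose_spec.1⟩) n
  have hF : ∀ n, π n (n + 1) (F (n + 1)).1 = (F n).1 := fun n =>
    (hWsurj n (F n).1 (F n).2).choose_spec.2
  refine ⟨fun n => (F n).1, fun n => ?_, ?_⟩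
  · have h1 := (F n).2 n le_rfl
    rwa [hcn, hMn] at h1
  · intro k n hkn
    induction n, hkn using Nat.le_induction with
    | base => exact hid k _
    | succ n hn ih =>
      rw [← hcomp hn (Nat.le_succ n), hF n, ih]

end ML



open Submodule

section Artinian

variable {R : Type u} [CommRing R]

/-- If `M` is torsion by an ideal `I` and Artinian as an `R ⧸ I`-module, it is
Artinian as an `R`-module. -/
private lemma isArtinian_of_quot_artinian {M : Type v} [AddCommGroup M] [Module R M]
    (I : Ideal R) (hM : Module.IsTorsionBySet R M I)
    (h : letI := hM.module; IsArtinian (R ⧸ I) M) : IsArtinian R M := by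
  letI := hM.module
  rw [isArtinian_iff] at h ⊢
  let f : Submodule R M → Submodule (R ⧸ I) M := fun N =>
    { carrier := N
      add_mem' := fun ha hb => N.add_mem ha hb
      zero_mem' := N.zero_mem
      smul_mem' := fun cq x hx => by
        obtain ⟨r, rfl⟩ := Ideal.Quotient.mk_surjective cq
        show (Ideal.Quotient.mk I r) • x ∈ N
        rw [hM.mk_smul]
        exact N.smul_mem r hx }
  have hmem : ∀ (N : Submodule R M) (x : M), x ∈ f N ↔ x ∈ N := fun _ _ => Iff.rfl
  have hmono : ∀ {N N' : Submodule R M}, N < N' → f N < f N' := by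
    intro N N' hlt
    refine lt_of_le_of_ne (fun x hx => ((hmem N' x).mpr (hlt.le ((hmem N x).mp hx)))) ?_
    intro heq
    refine hlt.ne (le_antisymm hlt.le fun x hx => ?_)
    have : x ∈ f N' := (hmem N' x).mpr hx
    rw [← heq] at this
    exact (hmem N x).mp this
  have wfq : WellFounded (fun N N' : Submodule R M => f N < f N') :=
    InvImage.wf f h
  exact Subrelation.wf (fun {N N'} hlt => hmono hlt) wfq

/-- For `R` Noetherian and `m` maximal, `R ⧸ m ^ n` is an Artinian `R`-module. -/
private lemma isArtinian_quotient_pow [IsNoetherianRing R] (m : Ideal R) [m.IsMaximal] :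
    ∀ n : ℕ, IsArtinian R (R ⧸ (m ^ n : Ideal R)) := by
  intro n
  induction n with
  | zero =>
    rw [pow_zero, Ideal.one_eq_top]
    have hsub : Subsingleton (R ⧸ (⊤ : Ideal R)) := by
      constructor
      intro x y
      obtain ⟨a, rfl⟩ := Ideal.Quotient.mk_surjective x
      obtain ⟨b, rfl⟩ := Ideal.Quotient.mk_surjective y
      rw [Ideal.Quotient.eq]
      exact Submodule.mem_top
    exact isArtinian_of_finite
  | succ n ih =>
    set N : Submodule R (R ⧸ (m ^ (n + 1) : Ideal R)) :=
      Submodule.map (Submodule.mkQ (m ^ (n + 1) : Ideal R)) (m ^ n : Ideal R) with hN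
    -- N is torsion by m
    have htor : Module.IsTorsionBySet R N (m : Set R) := by
      intro x a
      obtain ⟨y, hy⟩ := x
      obtain ⟨z, hz, hzx⟩ := hy
      apply Subtype.ext
      show (a : R) • y = 0
      rw [← hzx, ← map_smul]
      rw [Submodule.mkQ_apply, Submodule.Quotient.mk_eq_zero]
      have h1 : (a : R) * z ∈ m * m ^ n := Ideal.mul_mem_mul a.2 hz
      rwa [← pow_succ'] at h1
    -- N is a finite R-module
    haveI hfinN : Module.Finite R N := by
      rw [Module.Finite.iff_fg]
      exact Submodule.FG.map _ (IsNoetherian.noetherian _)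
    letI := htor.module
    haveI : IsScalarTower R (R ⧸ (m : Ideal R)) N := htor.isScalarTower
    haveI hfinN' : Module.Finite (R ⧸ (m : Ideal R)) N :=
      Module.Finite.of_restrictScalars_finite R _ _
    letI : Field (R ⧸ (m : Ideal R)) := Ideal.Quotient.field m
    haveI : IsArtinianRing (R ⧸ (m : Ideal R)) := inferInstance
    haveI hNart' : IsArtinian (R ⧸ (m : Ideal R)) N := isArtinian_of_fg_of_artinian'
    haveI hNart : IsArtinian R N := isArtinian_of_quot_artinian m htor hNart'
    -- exact sequence N → R⧸m^{n+1} → R⧸m^n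
    have hle : (m ^ (n + 1) : Submodule R R) ≤ Submodule.comap LinearMap.id (m ^ n : Submodule R R) :=
      Ideal.pow_le_pow_right (Nat.le_succ n)
    set g : (R ⧸ (m ^ (n + 1) : Ideal R)) →ₗ[R] (R ⧸ (m ^ n : Ideal R)) :=
      Submodule.mapQ _ _ LinearMap.id hle with hg
    have hker : LinearMap.range N.subtype = LinearMap.ker g := by
      rw [Submodule.range_subtype, hg, Submodule.mapQ, Submodule.ker_liftQ,
        LinearMap.ker_comp, Submodule.ker_mkQ, Submodule.comap_id, hN]
    exact isArtinian_of_range_eq_ker N.subtype g hker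

/-- Artinian-ness of the levels of the adic completion tower. -/
private lemma isArtinian_quotient_pow_smul [IsNoetherianRing R] (m : Ideal R) [m.IsMaximal]
    (n : ℕ) : IsArtinian R (R ⧸ (m ^ n • ⊤ : Ideal R)) := by
  haveI := isArtinian_quotient_pow m n
  have h : (m ^ n • ⊤ : Ideal R) = (m ^ n : Ideal R) := by ext x; simp
  exact isArtinian_of_linearEquiv (Submodule.quotEquivOfEq _ _ h.symm)

end Artinian



open Submodule AdicCompletion

section Key

variable {R : Type u} [CommRing R]

private theorem key_lift (m : Ideal R)
    (hart : ∀ n : ℕ, IsArtinian R (R ⧸ (m ^ n • ⊤ : Ideal R)))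
    {ι : Type v} [Fintype ι] (b : ι → AdicCompletion m R) (x : AdicCompletion m R)
    (H : ∀ n : ℕ, ∃ v : ι → R ⧸ (m ^ n • ⊤ : Ideal R),
      ∑ i, v i * (b i).val n = x.val n) :
    ∃ c : ι → AdicCompletion m R, ∑ i, c i * b i = x := by
  classical
  let Q : ℕ → Type u := fun n => R ⧸ (m ^ n • ⊤ : Ideal R)
  let A : ℕ → Type (max u v) := fun n => ι → Q n
  haveI : ∀ n, IsArtinian R (Q n) := hart
  haveI : ∀ n, IsArtinian R (A n) := fun n => isArtinian_pi'
  -- totalized transition maps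
  let tq : ∀ k n : ℕ, Q n →ₗ[R] Q k := fun k n =>
    if h : k ≤ n then AdicCompletion.transitionMap m R h else 0
  have tq_pos : ∀ {k n : ℕ} (h : k ≤ n),
      tq k n = AdicCompletion.transitionMap m R h := by
    intro k n h
    simp only [tq, dif_pos h]
  have tq_id : ∀ n, tq n n = LinearMap.id := by
    intro n
    rw [tq_pos le_rfl]
    exact LinearMap.ext fun y => by
      obtain ⟨r, rfl⟩ := Submodule.Quotient.mk_surjective _ y; rfl
  have tq_comp : ∀ {i j k : ℕ} (hij : i ≤ j) (hjk : j ≤ k) (y : Q k),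
      tq i j (tq j k y) = tq i k y := by
    intro i j k hij hjk y
    rw [tq_pos hij, tq_pos hjk, tq_pos (hij.trans hjk)]
    obtain ⟨r, rfl⟩ := Submodule.Quotient.mk_surjective _ y; rfl
  have tq_mul : ∀ {k n : ℕ} (h : k ≤ n) (y z : Q n),
      tq k n (y * z) = tq k n y * tq k n z := by
    intro k n h y z
    rw [tq_pos h]
    exact AdicCompletion.transitionMap_map_mul m h y z
  have tq_val : ∀ {k n : ℕ} (h : k ≤ n) (z : AdicCompletion m R),
      tq k n (z.val n) = z.val k := by
    intro k n h z
    rw [tq_pos h]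
    exact z.property h
  let π : ∀ k n : ℕ, A n →ₗ[R] A k := fun k n =>
    LinearMap.pi (fun i => (tq k n).comp (LinearMap.proj i))
  have π_apply : ∀ (k n : ℕ) (w : A n) (i : ι), π k n w i = tq k n (w i) := by
    intro k n w i; rfl
  -- the syzygy maps
  let ψ : ∀ n, A n →ₗ[R] Q n := fun n =>
    { toFun := fun v => ∑ i, v i * (b i).val n
      map_add' := by
        intro v w
        rw [← Finset.sum_add_distrib]
        exact Finset.sum_congr rfl fun i _ => by
          show (v i + w i) * _ = v i * _ + w i * _
          rw [add_mul]
      map_smul' := by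
        intro r v
        rw [RingHom.id_apply, Finset.smul_sum]
        exact Finset.sum_congr rfl fun i _ => by
          show (r • v i) * _ = r • (v i * _)
          rw [smul_mul_assoc] }
  have ψ_apply : ∀ (n : ℕ) (w : A n), ψ n w = ∑ i, w i * (b i).val n := fun _ _ => rfl
  have hψπ : ∀ {k n : ℕ} (h : k ≤ n) (w : A n), ψ k (π k n w) = tq k n (ψ n w) := by
    intro k n h w
    rw [ψ_apply, ψ_apply, map_sum]
    refine Finset.sum_congr rfl fun i _ => ?_
    rw [π_apply, tq_mul h, tq_val h]
  let K : ∀ n, Submodule R (A n) := fun n => LinearMap.ker (ψ n)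
  let a : ∀ n, A n := fun n => (H n).choose
  have ha' : ∀ n, ψ n (a n) = x.val n := fun n => (H n).choose_spec
  have hid : ∀ n (w : A n), π n n w = w := by
    intro n w
    funext i
    rw [π_apply, tq_id]
    rfl
  have hcomp : ∀ {i j k : ℕ}, i ≤ j → j ≤ k → ∀ w : A k, π i j (π j k w) = π i k w := by
    intro i j k hij hjk w
    funext t
    rw [π_apply, π_apply, π_apply, tq_comp hij hjk]
  have hK : ∀ {k n : ℕ}, k ≤ n → (K n).map (π k n) ≤ K k := by
    rintro k n h y hy
    obtain ⟨w, hw, rfl⟩ := hy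
    have hw0 : ψ n w = 0 := hw
    show ψ k (π k n w) = 0
    rw [hψπ h, hw0]
    exact _root_.map_zero _
  have ha : ∀ {k n : ℕ}, k ≤ n → π k n (a n) - a k ∈ K k := by
    intro k n h
    show ψ k (π k n (a n) - a k) = 0
    rw [map_sub, hψπ h, ha', ha', tq_val h, sub_self]
  obtain ⟨v, hvK, hvcomp⟩ := ml_exists_compatible A π hid hcomp K a hK ha
  -- assemble the coefficients
  let c : ι → AdicCompletion m R := fun i =>
    ⟨fun n => v n i, by
      intro k n hkn
      have h1 := congrFun (hvcomp hkn) i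
      rw [π_apply] at h1
      show AdicCompletion.transitionMap m R hkn (v n i) = v k i
      rw [← tq_pos hkn]
      exact h1⟩
  refine ⟨c, AdicCompletion.ext fun n => ?_⟩
  rw [AdicCompletion.val_sum_apply]
  have hval : ∀ i, (c i * b i).val n = v n i * (b i).val n := fun i => rfl
  calc ∑ i, (c i * b i).val n = ∑ i, v n i * (b i).val n :=
        Finset.sum_congr rfl fun i _ => hval i
    _ = ψ n (v n) := rfl
    _ = ψ n (a n) := by
        have h0 : ψ n (v n) - ψ n (a n) = 0 := by
          rw [← map_sub]; exact hvK n
        have := sub_eq_zero.mp h0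
        exact this
    _ = x.val n := ha' n

end Key

set_option maxHeartbeats 2000000 in
set_option synthInstance.maxHeartbeats 1000000 in
private theorem main_aux
    (R S : Type u) [CommRing R] [CommRing S]
    [IsNoetherianRing R] [Algebra R S]
    (m : Ideal R) [m.IsMaximal]
    (hcp : ∀ I : Ideal R, (I.map (algebraMap R S)).comap (algebraMap R S) = I)
    (I : Ideal (AdicCompletion m R)) :
    (I.map (algebraMap (AdicCompletion m R)
          (TensorProduct R (AdicCompletion m R) S))).comap
        (algebraMap (AdicCompletion m R)
          (TensorProduct R (AdicCompletion m R) S)) = I := by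
  classical
  apply le_antisymm _ Ideal.le_comap_map
  intro x hx
  rw [Ideal.mem_comap] at hx
  -- notation
  let Rh := AdicCompletion m R
  let T := TensorProduct R (AdicCompletion m R) S
  let f : Rh →+* T := algebraMap Rh T
  -- reduce to a finitely generated subideal
  have hx' : f x ∈ Submodule.span T ((f : Rh → T) '' I) := hx
  obtain ⟨t, hts, hxt⟩ := Submodule.mem_span_finite_of_mem_span hx'
  have hpre : ∀ y : {z : T // z ∈ t}, ∃ z : Rh, z ∈ I ∧ f z = y := by
    intro y
    rcases hts y.2 with ⟨z, hz, he⟩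
    exact ⟨z, hz, he⟩
  choose g hg1 hg2 using hpre
  -- it suffices that x lies in the span of the chosen generators
  suffices hxg : x ∈ Ideal.span (Set.range g) by
    refine Ideal.span_le.mpr ?_ hxg
    rintro z ⟨y, rfl⟩
    exact hg1 y
  rw [Ideal.mem_span_range_iff_exists_fun]
  apply key_lift m (fun n => isArtinian_quotient_pow_smul m n) g x
  intro n
  rw [← Ideal.mem_span_range_iff_exists_fun]
  -- the level-`n` purity argument
  let Qb : Ideal (R ⧸ (m ^ n • ⊤ : Ideal R)) :=
    Ideal.span (Set.range fun i => (g i).val n)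
  let J : Ideal R := Qb.comap (Ideal.Quotient.mk (m ^ n • ⊤ : Ideal R))
  obtain ⟨r, hr⟩ := Ideal.Quotient.mk_surjective (I := (m ^ n • ⊤ : Ideal R)) (x.val n)
  suffices hrJ : r ∈ J by
    rw [← hr]
    exact hrJ
  rw [← hcp J, Ideal.mem_comap]
  let QS : Ideal S := J.map (algebraMap R S)
  -- the quotient map φ : R ⧸ m^n•⊤ → S ⧸ QS
  have hm0 : ∀ ρ ∈ (m ^ n • ⊤ : Ideal R),
      (Ideal.Quotient.mk QS).comp (algebraMap R S) ρ = 0 := by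
    intro ρ hρ
    have hρJ : ρ ∈ J := by
      show Ideal.Quotient.mk (m ^ n • ⊤ : Ideal R) ρ ∈ Qb
      have h0 : Ideal.Quotient.mk (m ^ n • ⊤ : Ideal R) ρ = 0 :=
        Ideal.Quotient.eq_zero_iff_mem.mpr hρ
      rw [h0]
      exact Qb.zero_mem
    show Ideal.Quotient.mk QS (algebraMap R S ρ) = 0
    rw [Ideal.Quotient.eq_zero_iff_mem]
    exact Ideal.mem_map_of_mem _ hρJ
  let φ : (R ⧸ (m ^ n • ⊤ : Ideal R)) →+* S ⧸ QS :=
    Ideal.Quotient.lift _ ((Ideal.Quotient.mk QS).comp (algebraMap R S)) hm0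
  have hφmk : ∀ ρ : R, φ (Ideal.Quotient.mk (m ^ n • ⊤ : Ideal R) ρ) =
      Ideal.Quotient.mk QS (algebraMap R S ρ) := fun ρ => rfl
  have hφQb : ∀ y ∈ Qb, φ y = 0 := by
    intro y hy
    obtain ⟨q, rfl⟩ := Ideal.Quotient.mk_surjective y
    have hqJ : q ∈ J := hy
    rw [hφmk, Ideal.Quotient.eq_zero_iff_mem]
    exact Ideal.mem_map_of_mem _ hqJ
  -- evaluation as an algebra hom
  let ev : Rh →ₐ[R] (R ⧸ (m ^ n • ⊤ : Ideal R)) :=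
    AlgHom.ofLinearMap (AdicCompletion.eval m R n) rfl (fun _ _ => rfl)
  let F : Rh →ₐ[R] S ⧸ QS :=
    { toRingHom := φ.comp ev.toRingHom
      commutes' := by
        intro r'
        show φ (ev (algebraMap R Rh r')) = algebraMap R (S ⧸ QS) r'
        rw [ev.commutes r']
        show φ (Ideal.Quotient.mk (m ^ n • ⊤ : Ideal R) r') = algebraMap R (S ⧸ QS) r'
        rw [hφmk, IsScalarTower.algebraMap_apply R S (S ⧸ QS), Ideal.Quotient.algebraMap_eq] }
  have hFval : ∀ z : Rh, F z = φ (z.val n) := fun z => rfl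
  let G : S →ₐ[R] S ⧸ QS := Ideal.Quotient.mkₐ R QS
  let P : T →ₐ[R] S ⧸ QS := Algebra.TensorProduct.productMap F G
  have hPf : ∀ z : Rh, P (f z) = F z := by
    intro z
    have h1 : f z = z ⊗ₜ[R] (1 : S) := by
      rw [Algebra.TensorProduct.algebraMap_apply, Algebra.algebraMap_self_apply]
    rw [h1, Algebra.TensorProduct.productMap_apply_tmul, map_one, mul_one]
  -- P kills the generators, hence P (f x) = 0
  have hPt : ∀ y ∈ (t : Set T), P y = 0 := by
    intro y hy
    have h2 : f (g ⟨y, hy⟩) = y := hg2 ⟨y, hy⟩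
    rw [← h2, hPf, hFval]
    exact hφQb _ (Ideal.subset_span ⟨⟨y, hy⟩, rfl⟩)
  have hPx : P (f x) = 0 := by
    have h1 : P (f x) ∈ Ideal.map P (Ideal.span (t : Set T)) :=
      Ideal.mem_map_of_mem _ hxt
    rw [Ideal.map_span] at h1
    have h2 : Ideal.span ((P : T → S ⧸ QS) '' (t : Set T)) ≤ ⊥ := by
      rw [Ideal.span_le]
      rintro _ ⟨y, hy, rfl⟩
      simp only [SetLike.mem_coe, Ideal.mem_bot]
      exact hPt y hy
    simpa using h2 h1
  -- conclude : algebraMap R S r ∈ QS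
  rw [hPf, hFval, ← hr, hφmk] at hPx
  exact Ideal.Quotient.eq_zero_iff_mem.mp hPx


theorem cyclicallyPure_adicCompletion_baseChange
    (R S : Type u) [CommRing R] [CommRing S] [IsLocalRing R]
    [IsNoetherianRing R] [IsNoetherianRing S] [Algebra R S]
    (hinj : Function.Injective (algebraMap R S))
    (hcp : ∀ I : Ideal R, (I.map (algebraMap R S)).comap (algebraMap R S) = I)
    (I : Ideal (AdicCompletion (IsLocalRing.maximalIdeal R) R)) :
    (I.map (algebraMap (AdicCompletion (IsLocalRing.maximalIdeal R) R)
          (TensorProduct R (AdicCompletion (IsLocalRing.maximalIdeal R) R) S))).comap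
        (algebraMap (AdicCompletion (IsLocalRing.maximalIdeal R) R)
          (TensorProduct R (AdicCompletion (IsLocalRing.maximalIdeal R) R) S)) = I :=
  main_aux R S (IsLocalRing.maximalIdeal R) hcp I
end
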